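/- Let (A_{iI}, A_{iQ})_{i=1}^K be n×n complex matrices with A_{1I} = I_n satisfying the CUW conditions, with every A_{iI} unitary and A_{1Q} unitary, and let m ≤ n be a natural number such that trace(A_{1Q}) = 2m − n (so the Hermitian unitary matrix A_{1Q}, whose eigenvalues are ±1, has +1 with multiplicity m). Then for all real numbers u_1,…,u_K, v_1,…,v_K, the matrix D = Σ_{i=1}^K (u_i A_{iI} + v_i A_{iQ}) satisfies det(DᴴD) = (Σ_{i=1}^K (u_i + v_i)²)^m · (Σ_{i=1}^K (u_i − v_i)²)^{n−m}. -/

import Mathlib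

open Matrix

lemma det_aux {n : ℕ} (m : ℕ) (hm : m ≤ n) (Q : Matrix (Fin n) (Fin n) ℂ)
    (hH : Qᴴ = Q) (hQ2 : Q * Q = 1)
    (htr : Q.trace = 2 * (m : ℂ) - (n : ℂ)) (a b : ℝ) :
    ((a : ℂ) • (1 : Matrix (Fin n) (Fin n) ℂ) + (b : ℂ) • Q).det
      = ((a + b : ℝ) : ℂ) ^ m * ((a - b : ℝ) : ℂ) ^ (n - m) := by
  have hQ : Q.IsHermitian := hH
  set U : Matrix (Fin n) (Fin n) ℂ := (hQ.eigenvectorUnitary : Matrix (Fin n) (Fin n) ℂ) with hUdef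
  set d : Fin n → ℝ := hQ.eigenvalues with hddef
  have hmem := hQ.eigenvectorUnitary.2
  rw [Unitary.mem_iff] at hmem
  obtain ⟨hU1, hU2⟩ := hmem
  have hdiag : star U * Q * U = diagonal (RCLike.ofReal ∘ d) :=
    by have h := hQ.conjStarAlgAut_star_eigenvectorUnitary
       simpa only [Unitary.conjStarAlgAut_apply, Unitary.coe_star, star_star] using h
  have hspec : Q = U * diagonal (RCLike.ofReal ∘ d) * star U := hQ.spectral_theorem
  -- eigenvalues are ±1
  have hd2 : ∀ k, d k = 1 ∨ d k = -1 := by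
    have e1 : (star U * Q * U) * (star U * Q * U) = star U * Q * (U * star U) * (Q * U) := by
      noncomm_ring
    have e2 : star U * Q * (Q * U) = star U * (Q * Q) * U := by noncomm_ring
    have h1 : diagonal ((RCLike.ofReal : ℝ → ℂ) ∘ d) * diagonal ((RCLike.ofReal : ℝ → ℂ) ∘ d) = 1 := by
      rw [← hdiag, e1, hU2, mul_one, e2, hQ2, mul_one, hU1]
    rw [diagonal_mul_diagonal, ← diagonal_one] at h1
    have h2 := congrFun (diagonal_injective h1)
    intro k
    have h3 := h2 k
    simp only [Pi.mul_apply, Function.comp_apply, Pi.one_apply] at h3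
    have h3' : ((d k : ℝ) : ℂ) * ((d k : ℝ) : ℂ) = 1 := h3
    have h4 : d k * d k = 1 := by exact_mod_cast h3'
    exact mul_self_eq_one_iff.mp h4
  classical
  have hdneg : ∀ k ∈ Finset.univ.filter (fun k => ¬ d k = 1), d k = -1 := by
    intro k hk
    have h := (Finset.mem_filter.mp hk).2
    rcases hd2 k with h' | h'
    · exact absurd h' h
    · exact h'
  -- trace
  have htrd : ∑ k, d k = 2 * (m : ℝ) - (n : ℝ) := by
    have h1 : Q.trace = ∑ k, ((d k : ℝ) : ℂ) := by
      rw [hspec, trace_mul_cycle, hU1, one_mul, trace_diagonal]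
      rfl
    rw [h1] at htr
    have : ((∑ k, d k : ℝ) : ℂ) = ((2 * (m:ℝ) - (n:ℝ) : ℝ) : ℂ) := by
      push_cast
      simpa using htr
    exact_mod_cast this
  -- cardinality of the +1 eigenspace
  set S : Finset (Fin n) := Finset.univ.filter (fun k => d k = 1) with hSdef
  set T : Finset (Fin n) := Finset.univ.filter (fun k => ¬ d k = 1) with hTdef
  have hcards : S.card + T.card = n := by
    simpa using Finset.card_filter_add_card_filter_not (s := (Finset.univ : Finset (Fin n)))
      (p := fun k : Fin n => d k = 1)
  have hsum : ∑ k, d k = (S.card : ℝ) - (T.card : ℝ) := by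
    rw [← Finset.sum_filter_add_sum_filter_not Finset.univ (fun k => d k = 1)]
    have e1 : ∑ k ∈ S, d k = (S.card : ℝ) := by
      rw [Finset.sum_congr rfl (fun k hk => (Finset.mem_filter.mp hk).2), Finset.sum_const,
        nsmul_eq_mul, mul_one]
    have e2 : ∑ k ∈ T, d k = -(T.card : ℝ) := by
      rw [Finset.sum_congr rfl hdneg, Finset.sum_const, nsmul_eq_mul]
      ring
    rw [e1, e2]
    ring
  have hScard : S.card = m := by
    have h1 : (S.card : ℝ) - (T.card : ℝ) = 2 * (m:ℝ) - (n:ℝ) := by rw [← hsum, htrd]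
    have h2 : (S.card : ℝ) + (T.card : ℝ) = (n : ℝ) := by exact_mod_cast hcards
    have : (S.card : ℝ) = (m : ℝ) := by linarith
    exact_mod_cast this
  have hTcard : T.card = n - m := by omega
  -- determinant
  have hkey : (a : ℂ) • (1 : Matrix (Fin n) (Fin n) ℂ) + (b : ℂ) • Q
      = U * ((a : ℂ) • 1 + (b : ℂ) • diagonal (RCLike.ofReal ∘ d)) * star U := by
    rw [mul_add, add_mul, Matrix.mul_smul, Matrix.mul_smul, Matrix.smul_mul, Matrix.smul_mul,
      mul_one, hU2, ← hspec]
  rw [hkey, det_mul_right_comm, hU2, one_mul]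
  have hX : (a : ℂ) • (1 : Matrix (Fin n) (Fin n) ℂ) + (b : ℂ) • diagonal (RCLike.ofReal ∘ d)
      = diagonal (fun k => (a : ℂ) + (b : ℂ) * ((d k : ℝ) : ℂ)) := by
    rw [← diagonal_one, ← diagonal_smul, ← diagonal_smul, diagonal_add]
    congr 1
    funext k
    simp [mul_comm]
  rw [hX, det_diagonal]
  rw [← Finset.prod_filter_mul_prod_filter_not Finset.univ (fun k => d k = 1)]
  have p1 : ∏ k ∈ S, ((a : ℂ) + (b : ℂ) * ((d k : ℝ) : ℂ)) = ((a : ℂ) + (b : ℂ)) ^ S.card := by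
    have h : ∀ k ∈ S, ((a : ℂ) + (b : ℂ) * ((d k : ℝ) : ℂ)) = ((a : ℂ) + (b : ℂ)) := by
      intro k hk
      rw [(Finset.mem_filter.mp hk).2]
      push_cast
      ring
    rw [Finset.prod_congr rfl h, Finset.prod_const]
  have p2 : ∏ k ∈ T, ((a : ℂ) + (b : ℂ) * ((d k : ℝ) : ℂ)) = ((a : ℂ) - (b : ℂ)) ^ T.card := by
    have h : ∀ k ∈ T, ((a : ℂ) + (b : ℂ) * ((d k : ℝ) : ℂ)) = ((a : ℂ) - (b : ℂ)) := by
      intro k hk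
      rw [hdneg k hk]
      push_cast
      ring
    rw [Finset.prod_congr rfl h, Finset.prod_const]
  rw [p1, p2, hScard, hTcard]
  push_cast
  ring

lemma sum_antisym {K : ℕ} {M : Type*} [AddCommGroup M] [Module ℂ M]
    (c : Fin K → Fin K → ℂ) (B : Fin K → Fin K → M)
    (hc : ∀ i j, c i j = c j i) (hB : ∀ i j, i ≠ j → B i j = -B j i) :
    ∑ i : Fin K, ∑ j : Fin K, c i j • B i j = ∑ i : Fin K, c i i • B i i := by
  classical
  have hkey : ∀ i j : Fin K, c i j • B i j + c j i • B j i
      = if i = j then (2 : ℂ) • (c i i • B i i) else 0 := by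
    intro i j
    by_cases h : i = j
    · subst h
      rw [if_pos rfl, two_smul]
    · rw [if_neg h, hB i j h, hc i j, smul_neg, neg_add_cancel]
  have hdouble : (∑ i : Fin K, ∑ j : Fin K, c i j • B i j)
      + (∑ i : Fin K, ∑ j : Fin K, c i j • B i j)
      = (2 : ℂ) • ∑ i : Fin K, c i i • B i i := by
    nth_rewrite 1 [show (∑ i : Fin K, ∑ j : Fin K, c i j • B i j)
      = ∑ i : Fin K, ∑ j : Fin K, c j i • B j i from Finset.sum_comm]
    rw [← Finset.sum_add_distrib]
    simp_rw [← Finset.sum_add_distrib]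
    calc ∑ i : Fin K, ∑ j : Fin K, (c j i • B j i + c i j • B i j)
        = ∑ i : Fin K, ∑ j : Fin K, (if j = i then (2:ℂ) • (c j j • B j j) else 0) := by
          refine Finset.sum_congr rfl fun i _ => Finset.sum_congr rfl fun j _ => ?_
          rw [hkey j i]
      _ = ∑ i : Fin K, (2:ℂ) • (c i i • B i i) := by
          refine Finset.sum_congr rfl fun i _ => ?_
          rw [Finset.sum_ite_eq' Finset.univ i (fun j => (2:ℂ) • (c j j • B j j))]
          simp
      _ = (2:ℂ) • ∑ i : Fin K, c i i • B i i := by rw [Finset.smul_sum]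
  have h2 : (2 : ℂ) • (∑ i : Fin K, ∑ j : Fin K, c i j • B i j)
      = (2 : ℂ) • ∑ i : Fin K, c i i • B i i := by
    rw [two_smul]
    exact hdouble
  calc ∑ i : Fin K, ∑ j : Fin K, c i j • B i j
      = (2:ℂ)⁻¹ • ((2:ℂ) • ∑ i : Fin K, ∑ j : Fin K, c i j • B i j) := by
        rw [smul_smul, inv_mul_cancel₀ two_ne_zero, one_smul]
    _ = (2:ℂ)⁻¹ • ((2:ℂ) • ∑ i : Fin K, c i i • B i i) := by rw [h2]
    _ = ∑ i : Fin K, c i i • B i i := by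
        rw [smul_smul, inv_mul_cancel₀ two_ne_zero, one_smul]

/-- The CUW conditions on a family of weight-matrix pairs (index `⟨0,hK⟩`
plays the role of the index `1` of the paper). -/
def CUWConds {n K : ℕ} (hK : 0 < K) (AI AQ : Fin K → Matrix (Fin n) (Fin n) ℂ) : Prop :=
  AI ⟨0, hK⟩ = 1 ∧
  (∀ i : Fin K, i ≠ ⟨0, hK⟩ → (AI i)ᴴ = -(AI i)) ∧
  (∀ i j : Fin K, i ≠ ⟨0, hK⟩ → j ≠ ⟨0, hK⟩ → i ≠ j → AI i * AI j = -(AI j * AI i)) ∧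
  (AQ ⟨0, hK⟩)ᴴ = AQ ⟨0, hK⟩ ∧
  (∀ i : Fin K, i ≠ ⟨0, hK⟩ → AQ i = AQ ⟨0, hK⟩ * AI i) ∧
  (∀ j : Fin K, AQ ⟨0, hK⟩ * AI j = AI j * AQ ⟨0, hK⟩)

/-- Determinant of the Gram matrix of a codeword difference of a CUW-SSD code
whose discriminant `A_{1Q}` (Hermitian unitary, eigenvalues `±1`) has trace
`2m - n`: it equals `(Σ (uᵢ+vᵢ)²)^m (Σ (uᵢ-vᵢ)²)^(n-m)`. -/
theorem cuw_codeword_difference_det {n K : ℕ} (hK : 0 < K)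
    (AI AQ : Fin K → Matrix (Fin n) (Fin n) ℂ)
    (hUI : ∀ i, (AI i)ᴴ * AI i = 1)
    (hUQ1 : (AQ ⟨0, hK⟩)ᴴ * AQ ⟨0, hK⟩ = 1)
    (hCUW : CUWConds hK AI AQ)
    (m : ℕ) (hm : m ≤ n)
    (htr : (AQ ⟨0, hK⟩).trace = 2 * (m : ℂ) - (n : ℂ))
    (u v : Fin K → ℝ) :
    letI D : Matrix (Fin n) (Fin n) ℂ :=
      ∑ i : Fin K, ((u i : ℂ) • AI i + (v i : ℂ) • AQ i)
    (Dᴴ * D).det =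
      ((∑ i : Fin K, (u i + v i) ^ 2 : ℝ) : ℂ) ^ m *
        ((∑ i : Fin K, (u i - v i) ^ 2 : ℝ) : ℂ) ^ (n - m) := by
  obtain ⟨hA0, hanti, hprod, hQH, hAQ, hcomm⟩ := hCUW
  set z : Fin K := (⟨0, hK⟩ : Fin K) with hz
  set Q : Matrix (Fin n) (Fin n) ℂ := AQ z with hQdef
  have hQ2 : Q * Q = 1 := by nth_rewrite 1 [← hQH]; exact hUQ1
  have hAQall : ∀ i, AQ i = Q * AI i := by
    intro i
    by_cases h : i = z
    · subst h; rw [hA0, mul_one]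
    · exact hAQ i h
  have hcommH : ∀ j, (AI j)ᴴ * Q = Q * (AI j)ᴴ := by
    intro j
    have h := congrArg conjTranspose (hcomm j)
    rw [conjTranspose_mul, conjTranspose_mul, hQH] at h
    exact h
  -- antisymmetry of B i j = (AI i)ᴴ * AI j
  have hBanti : ∀ i j : Fin K, i ≠ j → (AI i)ᴴ * AI j = -((AI j)ᴴ * AI i) := by
    intro i j hij
    by_cases hi : i = z
    · subst hi
      have hj : j ≠ z := fun h => hij h.symm
      rw [hA0, conjTranspose_one, one_mul, hanti j hj, neg_mul, neg_neg, mul_one]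
    · by_cases hj : j = z
      · subst hj
        rw [hA0, conjTranspose_one, one_mul, hanti i hi, mul_one]
      · rw [hanti i hi, hanti j hj, neg_mul, neg_mul, neg_neg, hprod i j hi hj hij, neg_neg]
  -- the key expansion of a single cross term
  have main : ∀ i j : Fin K,
      ((u i : ℂ) • (AI i)ᴴ + (v i : ℂ) • (AQ i)ᴴ) * ((u j : ℂ) • AI j + (v j : ℂ) • AQ j)
        = ((u i * u j + v i * v j : ℝ) : ℂ) • ((AI i)ᴴ * AI j)
          + ((u i * v j + v i * u j : ℝ) : ℂ) • (Q * ((AI i)ᴴ * AI j)) := by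
    intro i j
    rw [hAQall i, hAQall j, conjTranspose_mul, hQH]
    have h1 : (AI i)ᴴ * (Q * AI j) = Q * ((AI i)ᴴ * AI j) := by
      rw [← mul_assoc, hcommH i, mul_assoc]
    have h2 : ((AI i)ᴴ * Q) * AI j = Q * ((AI i)ᴴ * AI j) := by
      rw [hcommH i, mul_assoc]
    have h3 : ((AI i)ᴴ * Q) * (Q * AI j) = (AI i)ᴴ * AI j := by
      rw [mul_assoc, ← mul_assoc Q Q, hQ2, one_mul]
    rw [add_mul, mul_add, mul_add, smul_mul_assoc, smul_mul_assoc, smul_mul_assoc,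
      smul_mul_assoc, mul_smul_comm, mul_smul_comm, mul_smul_comm, mul_smul_comm,
      h1, h2, h3]
    push_cast
    module
  -- gram matrix computation
  have hDH : (∑ i : Fin K, ((u i : ℂ) • AI i + (v i : ℂ) • AQ i))ᴴ
      = ∑ i : Fin K, ((u i : ℂ) • (AI i)ᴴ + (v i : ℂ) • (AQ i)ᴴ) := by
    rw [conjTranspose_sum]
    refine Finset.sum_congr rfl fun i _ => ?_
    rw [conjTranspose_add, conjTranspose_smul, conjTranspose_smul, Complex.star_def,
      Complex.conj_ofReal, Complex.conj_ofReal]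
  set a : ℝ := ∑ i : Fin K, (u i ^ 2 + v i ^ 2) with ha
  set b : ℝ := ∑ i : Fin K, (2 * u i * v i) with hb
  have hDD : (∑ i : Fin K, ((u i : ℂ) • AI i + (v i : ℂ) • AQ i))ᴴ
      * (∑ i : Fin K, ((u i : ℂ) • AI i + (v i : ℂ) • AQ i))
      = (a : ℂ) • 1 + (b : ℂ) • Q := by
    rw [hDH, Finset.sum_mul_sum]
    calc ∑ i : Fin K, ∑ j : Fin K,
          ((u i : ℂ) • (AI i)ᴴ + (v i : ℂ) • (AQ i)ᴴ) * ((u j : ℂ) • AI j + (v j : ℂ) • AQ j)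
        = ∑ i : Fin K, ∑ j : Fin K,
            (((u i * u j + v i * v j : ℝ) : ℂ) • ((AI i)ᴴ * AI j)
              + ((u i * v j + v i * u j : ℝ) : ℂ) • (Q * ((AI i)ᴴ * AI j))) :=
          Finset.sum_congr rfl fun i _ => Finset.sum_congr rfl fun j _ => main i j
      _ = (∑ i : Fin K, ∑ j : Fin K, ((u i * u j + v i * v j : ℝ) : ℂ) • ((AI i)ᴴ * AI j))
            + ∑ i : Fin K, ∑ j : Fin K,
                ((u i * v j + v i * u j : ℝ) : ℂ) • (Q * ((AI i)ᴴ * AI j)) := by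
          simp only [Finset.sum_add_distrib]
      _ = (∑ i : Fin K, ((u i * u i + v i * v i : ℝ) : ℂ) • ((AI i)ᴴ * AI i))
            + ∑ i : Fin K, ((u i * v i + v i * u i : ℝ) : ℂ) • (Q * ((AI i)ᴴ * AI i)) := by
          congr 1
          · exact sum_antisym _ _ (fun i j => by norm_cast; ring) hBanti
          · exact sum_antisym _ _ (fun i j => by norm_cast; ring)
              (fun i j h => by rw [hBanti i j h, mul_neg])
      _ = (a : ℂ) • 1 + (b : ℂ) • Q := by
          congr 1
          · calc ∑ i : Fin K, ((u i * u i + v i * v i : ℝ) : ℂ) • ((AI i)ᴴ * AI i)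
                = ∑ i : Fin K, ((u i ^ 2 + v i ^ 2 : ℝ) : ℂ) • (1 : Matrix (Fin n) (Fin n) ℂ) :=
                  Finset.sum_congr rfl fun i _ => by
                    rw [hUI i]; congr 1; push_cast; ring
              _ = (a : ℂ) • 1 := by
                  rw [← Finset.sum_smul, ha, Complex.ofReal_sum]
          · calc ∑ i : Fin K, ((u i * v i + v i * u i : ℝ) : ℂ) • (Q * ((AI i)ᴴ * AI i))
                = ∑ i : Fin K, ((2 * u i * v i : ℝ) : ℂ) • Q :=
                  Finset.sum_congr rfl fun i _ => by
                    rw [hUI i, mul_one]; congr 1; push_cast; ring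
              _ = (b : ℂ) • Q := by
                  rw [← Finset.sum_smul, hb, Complex.ofReal_sum]
  show ((∑ i : Fin K, ((u i : ℂ) • AI i + (v i : ℂ) • AQ i))ᴴ
      * (∑ i : Fin K, ((u i : ℂ) • AI i + (v i : ℂ) • AQ i))).det = _
  rw [hDD, det_aux m hm Q hQH hQ2 htr a b]
  have h1 : a + b = ∑ i : Fin K, (u i + v i) ^ 2 := by
    rw [ha, hb, ← Finset.sum_add_distrib]
    exact Finset.sum_congr rfl fun i _ => by ring
  have h2 : a - b = ∑ i : Fin K, (u i - v i) ^ 2 := by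
    rw [ha, hb, ← Finset.sum_sub_distrib]
    exact Finset.sum_congr rfl fun i _ => by ring
  rw [h1, h2]
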